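/- arXiv:2004.01285 — 5 statements merged into one kernel-verified Lean document; each statement's English description precedes it below -/
import Mathlib

section
/- Suppose m ≥ 2 is an integer and (p_n) is a sequence of primes satisfying p_n^m < p_{n+1} < (p_n + 1)^m - 1 for all n ≥ 1. Then the sequence α_n = p_n^(m^{-n}) is strictly increasing and the sequence β_n = (p_n + 1)^(m^{-n}) is strictly decreasing, and α_n < β_k for all n, k. -/
private lemma aux_lt_of_rpow_lt {a b E : ℝ} (hb : 0 ≤ b) (hE : 0 < E)
    (h : a ^ E < b ^ E) : a < b := by
  by_contra hle
  push_neg at hle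
  exact absurd (Real.rpow_le_rpow hb hle hE.le) (not_le.mpr h)

theorem stmt_2 (m : ℕ) (hm : 2 ≤ m) (p : ℕ → ℕ)
    (hp : ∀ n : ℕ, 1 ≤ n → (p n).Prime)
    (hrec : ∀ n : ℕ, 1 ≤ n → (p n) ^ m < p (n + 1) ∧ p (n + 1) < (p n + 1) ^ m - 1) :
    (∀ n : ℕ, 1 ≤ n →
      (p n : ℝ) ^ (((m : ℝ) ^ n)⁻¹) < (p (n + 1) : ℝ) ^ (((m : ℝ) ^ (n + 1))⁻¹)) ∧
    (∀ n : ℕ, 1 ≤ n →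
      ((p (n + 1) : ℝ) + 1) ^ (((m : ℝ) ^ (n + 1))⁻¹) < ((p n : ℝ) + 1) ^ (((m : ℝ) ^ n)⁻¹)) ∧
    (∀ n k : ℕ, 1 ≤ n → 1 ≤ k →
      (p n : ℝ) ^ (((m : ℝ) ^ n)⁻¹) < ((p k : ℝ) + 1) ^ (((m : ℝ) ^ k)⁻¹)) := by
  have hm0 : (0:ℝ) < m := by positivity
  have hpow : ∀ n : ℕ, (0:ℝ) < (m:ℝ) ^ n := fun n => pow_pos hm0 n
  have hinv : ∀ n : ℕ, (0:ℝ) < ((m:ℝ) ^ n)⁻¹ := fun n => inv_pos.mpr (hpow n)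
  have key_e : ∀ n : ℕ, ((m:ℝ) ^ n)⁻¹ * (m:ℝ) ^ (n + 1) = (m:ℝ) := by
    intro n
    rw [pow_succ]
    field_simp
  have key_e2 : ∀ n : ℕ, ((m:ℝ) ^ (n + 1))⁻¹ * (m:ℝ) ^ (n + 1) = 1 := by
    intro n
    exact inv_mul_cancel₀ (hpow (n+1)).ne'
  -- part 1
  have hA : ∀ n : ℕ, 1 ≤ n →
      (p n : ℝ) ^ (((m : ℝ) ^ n)⁻¹) < (p (n + 1) : ℝ) ^ (((m : ℝ) ^ (n + 1))⁻¹) := by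
    intro n hn
    apply aux_lt_of_rpow_lt (by positivity) (hpow (n+1))
    rw [← Real.rpow_mul (by positivity), ← Real.rpow_mul (by positivity),
      key_e, key_e2, Real.rpow_one, Real.rpow_natCast]
    exact_mod_cast (hrec n hn).1
  have hB : ∀ n : ℕ, 1 ≤ n →
      ((p (n + 1) : ℝ) + 1) ^ (((m : ℝ) ^ (n + 1))⁻¹) < ((p n : ℝ) + 1) ^ (((m : ℝ) ^ n)⁻¹) := by
    intro n hn
    apply aux_lt_of_rpow_lt (by positivity) (hpow (n+1))
    rw [← Real.rpow_mul (by positivity), ← Real.rpow_mul (by positivity),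
      key_e, key_e2, Real.rpow_one, Real.rpow_natCast]
    have h2 := (hrec n hn).2
    have : p (n + 1) + 1 < (p n + 1) ^ m := by omega
    calc ((p (n+1) : ℝ) + 1) = ((p (n+1) + 1 : ℕ) : ℝ) := by push_cast; ring
      _ < (((p n + 1) ^ m : ℕ) : ℝ) := by exact_mod_cast this
      _ = ((p n : ℝ) + 1) ^ m := by push_cast; ring
  have hAB : ∀ n : ℕ, (p n : ℝ) ^ (((m : ℝ) ^ n)⁻¹) < ((p n : ℝ) + 1) ^ (((m : ℝ) ^ n)⁻¹) :=
    fun n => Real.rpow_lt_rpow (by positivity) (by linarith) (hinv n)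
  refine ⟨hA, hB, ?_⟩
  intro n k hn hk
  rcases le_total n k with h | h
  · have mono : ∀ j, n ≤ j → (p n : ℝ) ^ (((m : ℝ) ^ n)⁻¹) ≤ (p j : ℝ) ^ (((m : ℝ) ^ j)⁻¹) := by
      intro j hj
      induction j, hj using Nat.le_induction with
      | base => exact le_refl _
      | succ j hj ih => exact ih.trans (hA j (hn.trans hj)).le
    exact lt_of_le_of_lt (mono k h) (hAB k)
  · have mono : ∀ j, k ≤ j → ((p j : ℝ) + 1) ^ (((m : ℝ) ^ j)⁻¹) ≤ ((p k : ℝ) + 1) ^ (((m : ℝ) ^ k)⁻¹) := by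
      intro j hj
      induction j, hj using Nat.le_induction with
      | base => exact le_refl _
      | succ j hj ih => exact (hB j (hk.trans hj)).le.trans ih
    exact lt_of_lt_of_le (hAB n) (mono n h)
end

section
/- Suppose m ≥ 2 is an integer and (p_n) is a sequence of primes with p_n^m < p_{n+1} < (p_n + 1)^m - 1 for all n ≥ 1. Then the limit A = lim_{n→∞} p_n^(m^{-n}) exists, and for every n ≥ 1 we have ⌊A^(m^n)⌋ = p_n. -/
open Filter Real

theorem stmt_3 (m : ℕ) (hm : 2 ≤ m) (p : ℕ → ℕ)
    (hp : ∀ n : ℕ, 1 ≤ n → (p n).Prime)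
    (hrec : ∀ n : ℕ, 1 ≤ n → (p n) ^ m < p (n + 1) ∧ p (n + 1) < (p n + 1) ^ m - 1) :
    ∃ A : ℝ, Filter.Tendsto (fun n : ℕ => (p n : ℝ) ^ (((m : ℝ) ^ n)⁻¹))
        Filter.atTop (nhds A) ∧
      ∀ n : ℕ, 1 ≤ n → ⌊A ^ (m ^ n : ℕ)⌋ = (p n : ℤ) := by
  have hM1 : (1:ℝ) < (m:ℝ) := by exact_mod_cast lt_of_lt_of_le one_lt_two hm
  have hM0 : (0:ℝ) < (m:ℝ) := by linarith
  set e : ℕ → ℝ := fun n => ((m:ℝ)^n)⁻¹ with he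
  have hepos : ∀ n, 0 < e n := fun n => inv_pos.2 (pow_pos hM0 n)
  set a : ℕ → ℝ := fun n => (p n : ℝ) ^ e n with ha
  set b : ℕ → ℝ := fun n => ((p n : ℝ) + 1) ^ e n with hb
  have hMne : (m:ℝ) ≠ 0 := ne_of_gt hM0
  have hkey : ∀ (x : ℝ), 0 ≤ x → ∀ n : ℕ, (x ^ (m:ℕ)) ^ e (n+1) = x ^ e n := by
    intro x hx n
    rw [← Real.rpow_natCast x m, ← Real.rpow_mul hx]
    congr 1
    simp only [he]
    field_simp [pow_succ]
    ring
  have hpowid : ∀ (x : ℝ), 0 ≤ x → ∀ n : ℕ, (x ^ e n) ^ (m^n : ℕ) = x := by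
    intro x hx n
    rw [← Real.rpow_natCast (x ^ e n) (m^n), ← Real.rpow_mul hx]
    have : e n * ((m^n : ℕ) : ℝ) = 1 := by
      simp only [he]
      push_cast
      field_simp
    rw [this, Real.rpow_one]
  have hanonneg : ∀ n, 0 ≤ a n := fun n => Real.rpow_nonneg (Nat.cast_nonneg _) _
  have hstep : ∀ n, 1 ≤ n → a n ≤ a (n+1) := by
    intro n hn
    have h1 : ((p n : ℝ)) ^ (m:ℕ) ≤ (p (n+1) : ℝ) := by exact_mod_cast (hrec n hn).1.le
    calc a n = ((p n:ℝ)^(m:ℕ)) ^ e (n+1) := (hkey _ (Nat.cast_nonneg _) n).symm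
      _ ≤ (p (n+1):ℝ) ^ e (n+1) :=
          Real.rpow_le_rpow (by positivity) h1 (hepos _).le
      _ = a (n+1) := rfl
  have hbstep : ∀ n, 1 ≤ n → b (n+1) < b n := by
    intro n hn
    have h2 : p (n+1) + 1 < (p n + 1)^m := Nat.add_lt_of_lt_sub (hrec n hn).2
    have h2' : (p (n+1) : ℝ) + 1 < ((p n : ℝ) + 1) ^ (m:ℕ) := by exact_mod_cast h2
    calc b (n+1) = ((p (n+1):ℝ) + 1) ^ e (n+1) := rfl
      _ < (((p n:ℝ) + 1) ^ (m:ℕ)) ^ e (n+1) :=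
          Real.rpow_lt_rpow (by positivity) h2' (hepos _)
      _ = b n := hkey _ (by positivity) n
  have hab : ∀ n, 1 ≤ n → a n < b n := by
    intro n hn
    exact Real.rpow_lt_rpow (Nat.cast_nonneg _) (by norm_num) (hepos n)
  have amono : ∀ i j, 1 ≤ i → i ≤ j → a i ≤ a j := by
    intro i j hi hij
    induction j, hij using Nat.le_induction with
    | base => exact le_refl _
    | succ k hk ih => exact ih.trans (hstep k (hi.trans hk))
  have bmono : ∀ i j, 1 ≤ i → i ≤ j → b j ≤ b i := by
    intro i j hi hij
    induction j, hij using Nat.le_induction with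
    | base => exact le_refl _
    | succ k hk ih => exact (hbstep k (hi.trans hk)).le.trans ih
  have haleb : ∀ n k, 1 ≤ n → 1 ≤ k → a k ≤ b n := by
    intro n k hn hk
    rcases le_or_gt k n with h | h
    · exact (amono k n hk h).trans (hab n hn).le
    · exact (hab k hk).le.trans (bmono n k hn h.le)
  set g : ℕ → ℝ := fun k => a (k+1) with hg
  have hgmono : Monotone g := monotone_nat_of_le_succ fun k => hstep (k+1) (by omega)
  have hgbdd : BddAbove (Set.range g) := by
    refine ⟨b 1, ?_⟩
    rintro x ⟨k, rfl⟩
    exact haleb 1 (k+1) le_rfl (by omega)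
  set A := ⨆ k, g k with hA
  have htg : Tendsto g atTop (nhds A) := tendsto_atTop_ciSup hgmono hgbdd
  have htend : Tendsto (fun n => (p n : ℝ) ^ e n) atTop (nhds A) :=
    (Filter.tendsto_add_atTop_iff_nat 1).mp htg
  refine ⟨A, htend, ?_⟩
  intro n hn
  have haA : a n ≤ A := by
    have : a n = g (n - 1) := by simp only [hg]; congr 1; omega
    rw [this]
    exact le_ciSup hgbdd (n - 1)
  have hAnonneg : 0 ≤ A := (hanonneg n).trans haA
  have hAb : A < b n := by
    have h1 : A ≤ b (n+1) := ciSup_le fun k => haleb (n+1) (k+1) (by omega) (by omega)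
    exact h1.trans_lt (hbstep n hn)
  have hlo : (p n : ℝ) ≤ A ^ (m^n : ℕ) := by
    calc (p n : ℝ) = (a n) ^ (m^n : ℕ) := (hpowid _ (Nat.cast_nonneg _) n).symm
      _ ≤ A ^ (m^n : ℕ) := pow_le_pow_left₀ (hanonneg n) haA _
  have hhi : A ^ (m^n : ℕ) < (p n : ℝ) + 1 := by
    calc A ^ (m^n : ℕ) < (b n) ^ (m^n : ℕ) :=
          pow_lt_pow_left₀ hAb hAnonneg (by positivity)
      _ = (p n : ℝ) + 1 := hpowid _ (by positivity) n
  rw [Int.floor_eq_iff]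
  constructor
  · push_cast; exact hlo
  · push_cast; exact hhi
end

section
/- Assume that for every integer n ≥ 1 there is a prime strictly between n^m and (n+1)^m, where m ≥ 2 is a fixed integer. Then for every prime q there exists a real constant A > 1 with ⌊A^m⌋ = q such that ⌊A^(m^n)⌋ is prime for all integers n ≥ 1. -/
theorem stmt_4 (m : ℕ) (hm : 2 ≤ m)
    (h : ∀ n : ℕ, 1 ≤ n → ∃ p : ℕ, p.Prime ∧ n ^ m < p ∧ p < (n + 1) ^ m) :
    ∀ q : ℕ, q.Prime → ∃ A : ℝ, 1 < A ∧ ⌊A ^ m⌋ = (q : ℤ) ∧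
      ∀ n : ℕ, 1 ≤ n → Prime ⌊A ^ (m ^ n : ℕ)⌋ := by
  intro q hq
  set next : ℕ → ℕ := fun p => if hp : 1 ≤ p then (h p hp).choose else 2 with hnext
  set P : ℕ → ℕ := fun n => next^[n] q with hPdef
  have hPsucc : ∀ n, P (n + 1) = next (P n) := fun n =>
    Function.iterate_succ_apply' next n q
  have hP0 : P 0 = q := rfl
  have hPprime : ∀ n, (P n).Prime := by
    intro n; induction n with
    | zero => simpa [hP0] using hq
    | succ k ih =>
      rw [hPsucc]
      have h1 : 1 ≤ P k := ih.one_lt.le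
      simp only [hnext, dif_pos h1]
      exact ((h (P k) h1).choose_spec).1
  have hspec : ∀ n, (P n) ^ m < P (n + 1) ∧ P (n + 1) < (P n + 1) ^ m := by
    intro n
    have h1 : 1 ≤ P n := (hPprime n).one_lt.le
    rw [hPsucc]
    simp only [hnext, dif_pos h1]
    exact ⟨((h (P n) h1).choose_spec).2.1, ((h (P n) h1).choose_spec).2.2⟩
  -- strict improvement : P (n+1) + 1 < (P n + 1)^m
  have hstrict : ∀ n, P (n + 1) + 1 < (P n + 1) ^ m := by
    intro n
    have hPn2 : 2 ≤ P n := (hPprime n).two_le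
    have hdvd : P n ∣ (P n + 1) ^ m - 1 := by
      have := Nat.sub_dvd_pow_sub_pow (P n + 1) 1 m
      simpa using this
    have ham : P n + 1 < (P n + 1) ^ m := by
      calc P n + 1 = (P n + 1) ^ 1 := (pow_one _).symm
      _ < (P n + 1) ^ m := Nat.pow_lt_pow_right (by omega) (by omega)
    have hne : P (n + 1) ≠ (P n + 1) ^ m - 1 := by
      intro he
      rcases ((hPprime (n + 1)).eq_one_or_self_of_dvd (P n) (he ▸ hdvd)) with h1 | h1
      · omega
      · omega
    have hlt := (hspec n).2
    omega
  -- real sequences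
  set N : ℕ → ℕ := fun n => m ^ (n + 1) with hNdef
  have hNpos : ∀ n, 0 < N n := fun n => Nat.pow_pos (by omega)
  have hNsucc : ∀ n, N (n + 1) = N n * m := fun n => by
    simp only [hNdef]; rw [← pow_succ]
  set u : ℕ → ℝ := fun n => (P n : ℝ) ^ ((N n : ℝ)⁻¹) with hudef
  set v : ℕ → ℝ := fun n => ((P n : ℝ) + 1) ^ ((N n : ℝ)⁻¹) with hvdef
  have hu_nonneg : ∀ n, 0 ≤ u n := fun n => Real.rpow_nonneg (Nat.cast_nonneg _) _
  have hv_nonneg : ∀ n, 0 ≤ v n := fun n =>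
    Real.rpow_nonneg (by positivity) _
  have hu_pow : ∀ n, (u n) ^ (N n) = (P n : ℝ) := fun n =>
    Real.rpow_inv_natCast_pow (Nat.cast_nonneg _) (hNpos n).ne'
  have hv_pow : ∀ n, (v n) ^ (N n) = (P n : ℝ) + 1 := fun n =>
    Real.rpow_inv_natCast_pow (by positivity) (hNpos n).ne'
  have hu1 : ∀ n, 1 < u n := by
    intro n
    have : (1 : ℝ) < (P n : ℝ) := by exact_mod_cast (hPprime n).one_lt
    exact (Real.one_lt_rpow_iff_of_pos (by linarith)).2
      (Or.inl ⟨this, by positivity⟩)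
  have hu_mono : ∀ n, u n ≤ u (n + 1) := by
    intro n
    apply le_of_pow_le_pow_left₀ (hNpos (n + 1)).ne' (hu_nonneg (n + 1))
    rw [hu_pow, hNsucc, pow_mul, hu_pow]
    exact_mod_cast (hspec n).1.le
  have hu_mono' : Monotone u := monotone_nat_of_le_succ hu_mono
  have hv_anti : ∀ n, v (n + 1) < v n := by
    intro n
    apply lt_of_pow_lt_pow_left₀ (N (n + 1)) (hv_nonneg n)
    rw [hv_pow, hNsucc, pow_mul, hv_pow]
    have := hstrict n
    push_cast
    exact_mod_cast this
  have hv_anti' : StrictAnti v := strictAnti_nat_of_succ_lt hv_anti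
  have huv : ∀ n, u n < v n := by
    intro n
    apply lt_of_pow_lt_pow_left₀ (N n) (hv_nonneg n)
    rw [hu_pow, hv_pow]
    linarith
  have huv' : ∀ a b, u a < v b := by
    intro a b
    calc u a ≤ u (max a b) := hu_mono' (le_max_left a b)
    _ < v (max a b) := huv _
    _ ≤ v b := hv_anti'.antitone (le_max_right a b)
  have hbdd : BddAbove (Set.range u) := ⟨v 0, by
    rintro x ⟨n, rfl⟩; exact (huv' n 0).le⟩
  set A : ℝ := ⨆ n, u n with hAdef
  have hA_ge : ∀ n, u n ≤ A := fun n => le_ciSup hbdd n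
  have hA_le : ∀ n, A ≤ v n := fun n => ciSup_le fun k => (huv' k n).le
  have hA_lt : ∀ n, A < v n := fun n =>
    lt_of_le_of_lt (hA_le (n + 1)) (hv_anti n)
  have hA_nonneg : 0 ≤ A := le_trans (hu_nonneg 0) (hA_ge 0)
  have hfloor : ∀ n, ⌊A ^ (N n)⌋ = (P n : ℤ) := by
    intro n
    have h1 : (P n : ℝ) ≤ A ^ (N n) := by
      rw [← hu_pow n]
      exact pow_le_pow_left₀ (hu_nonneg n) (hA_ge n) _
    have h2 : A ^ (N n) < (P n : ℝ) + 1 := by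
      rw [← hv_pow n]
      exact pow_lt_pow_left₀ (hA_lt n) hA_nonneg (hNpos n).ne'
    rw [Int.floor_eq_iff]
    constructor
    · exact_mod_cast h1
    · push_cast; linarith
  refine ⟨A, lt_of_lt_of_le (hu1 0) (hA_ge 0), ?_, ?_⟩
  · have := hfloor 0
    simp only [hNdef, zero_add, pow_one, hP0] at this
    exact this
  · intro n hn
    obtain ⟨k, rfl⟩ := Nat.exists_eq_add_of_le hn
    have hNk : m ^ (1 + k) = N k := by
      simp only [hNdef]; rw [add_comm]
    rw [hNk, hfloor k]
    exact Nat.prime_iff_prime_int.mp (hPprime k)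
end

section
/- Suppose m ≥ 2 and (p_n) is a sequence of primes with p_n^m < p_{n+1} < (p_n+1)^m for all n ≥ 1, and let A = lim_{n→∞} p_n^(m^{-n}). Then for all n, p_n^(m^{-n}) < A < (p_n + 1)^(m^{-n}). -/
theorem stmt_12 (m : ℕ) (hm : 2 ≤ m) (p : ℕ → ℕ)
    (hp : ∀ n : ℕ, 1 ≤ n → (p n).Prime)
    (hrec : ∀ n : ℕ, 1 ≤ n → (p n) ^ m < p (n + 1) ∧ p (n + 1) < (p n + 1) ^ m)
    (A : ℝ)
    (hA : Filter.Tendsto (fun n : ℕ => (p n : ℝ) ^ (((m : ℝ) ^ n)⁻¹))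
      Filter.atTop (nhds A)) :
    ∀ n : ℕ, 1 ≤ n →
      (p n : ℝ) ^ (((m : ℝ) ^ n)⁻¹) < A ∧
        A < ((p n : ℝ) + 1) ^ (((m : ℝ) ^ n)⁻¹) := by
  have hm0 : (0:ℝ) < (m:ℝ) := by
    have : 0 < m := by omega
    exact_mod_cast this
  set α : ℕ → ℝ := fun n => (p n : ℝ) ^ (((m:ℝ)^n)⁻¹) with hα
  set β : ℕ → ℝ := fun n => ((p n : ℝ) + 1) ^ (((m:ℝ)^n)⁻¹) with hβ
  have hexp : ∀ n : ℕ, 0 < ((m:ℝ)^n)⁻¹ := fun n => by positivity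
  have hkey : ∀ (x : ℝ) (n : ℕ), 0 ≤ x →
      (x^m) ^ (((m:ℝ)^(n+1))⁻¹) = x ^ (((m:ℝ)^n)⁻¹) := by
    intro x n hx
    rw [← Real.rpow_natCast x m, ← Real.rpow_mul hx]
    congr 1
    have hmne : (m:ℝ) ≠ 0 := ne_of_gt hm0
    have hpne : (m:ℝ)^n ≠ 0 := pow_ne_zero _ hmne
    rw [pow_succ]
    field_simp
  have hp2 : ∀ n : ℕ, 1 ≤ n → 2 ≤ p n := fun n hn => (hp n hn).two_le
  -- strict increase of α
  have hamono : ∀ n : ℕ, 1 ≤ n → α n < α (n+1) := by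
    intro n hn
    have h1 : ((p n : ℝ))^m < (p (n+1) : ℝ) := by
      exact_mod_cast (hrec n hn).1
    have h0 : (0:ℝ) ≤ (p n : ℝ)^m := by positivity
    calc α n = ((p n : ℝ)^m) ^ (((m:ℝ)^(n+1))⁻¹) := (hkey _ n (by positivity)).symm
      _ < (p (n+1) : ℝ) ^ (((m:ℝ)^(n+1))⁻¹) :=
        Real.rpow_lt_rpow h0 h1 (hexp (n+1))
      _ = α (n+1) := rfl
  -- strict nat inequality for β
  have hstrict : ∀ n : ℕ, 1 ≤ n → p (n+1) + 1 < (p n + 1)^m := by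
    intro n hn
    have h2 := (hrec n hn).2
    rcases lt_or_eq_of_le (Nat.succ_le_of_lt h2) with h | h
    · exact h
    · exfalso
      have hd : p n ∣ p (n+1) := by
        have := Nat.sub_dvd_pow_sub_pow (p n + 1) 1 m
        simp only [one_pow, Nat.add_sub_cancel] at this
        have heq : (p n + 1)^m - 1 = p (n+1) := by omega
        rwa [heq] at this
      have := (hp (n+1) (by omega)).eq_one_or_self_of_dvd _ hd
      have hlt : p n < p (n+1) := by
        have h1 := (hrec n hn).1
        have : p n ≤ (p n)^m := Nat.le_self_pow (by omega) _
        omega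
      have := hp2 n hn
      omega
  have hbdec : ∀ n : ℕ, 1 ≤ n → β (n+1) < β n := by
    intro n hn
    have h1 : ((p (n+1) : ℝ)) + 1 < ((p n : ℝ) + 1)^m := by
      have := hstrict n hn
      exact_mod_cast this
    calc β (n+1) = ((p (n+1) : ℝ) + 1) ^ (((m:ℝ)^(n+1))⁻¹) := rfl
      _ < (((p n : ℝ) + 1)^m) ^ (((m:ℝ)^(n+1))⁻¹) :=
        Real.rpow_lt_rpow (by positivity) h1 (hexp (n+1))
      _ = β n := hkey _ n (by positivity)
  have hαβ : ∀ n : ℕ, α n < β n := by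
    intro n
    exact Real.rpow_lt_rpow (by positivity) (by norm_num) (hexp n)
  -- monotone chains
  have hamono' : ∀ j k : ℕ, 1 ≤ j → j ≤ k → α j ≤ α k := by
    intro j k hj hjk
    induction k with
    | zero => omega
    | succ k ih =>
      rcases Nat.lt_or_ge j (k+1) with h | h
      · have hk : 1 ≤ k := by omega
        exact le_trans (ih (by omega)) (le_of_lt (hamono k hk))
      · have : j = k + 1 := by omega
        simp [this]
  have hbmono' : ∀ j k : ℕ, 1 ≤ j → j ≤ k → β k ≤ β j := by
    intro j k hj hjk
    induction k with
    | zero => omega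
    | succ k ih =>
      rcases Nat.lt_or_ge j (k+1) with h | h
      · have hk : 1 ≤ k := by omega
        exact le_trans (le_of_lt (hbdec k hk)) (ih (by omega))
      · have : j = k + 1 := by omega
        simp [this]
  intro n hn
  constructor
  · have hle : α (n+1) ≤ A := by
      refine ge_of_tendsto hA ?_
      refine Filter.eventually_atTop.2 ⟨n+1, fun k hk => ?_⟩
      exact hamono' (n+1) k (by omega) hk
    exact lt_of_lt_of_le (hamono n hn) hle
  · have hle : A ≤ β (n+1) := by
      refine le_of_tendsto hA ?_
      refine Filter.eventually_atTop.2 ⟨n+1, fun k hk => ?_⟩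
      exact le_trans (le_of_lt (hαβ k)) (hbmono' (n+1) k (by omega) hk)
    exact lt_of_le_of_lt hle (hbdec n hn)
end

section
/- Suppose that for every integer n ≥ 1 there is a prime strictly between n^2 and (n+1)^2 (Legendre's conjecture, strengthened to exclude the endpoint (n+1)^2 - 1 when it is composite, which holds for n ≥ 2 since n divides (n+1)^2 - 1). Then there exists a real constant A > 1 such that ⌊A^(2^n)⌋ is prime for all n ≥ 1. -/
private def millsSeq (g : ℕ → ℕ) : ℕ → ℕ
  | 0 => g 2
  | n + 1 => g (millsSeq g n)


theorem stmt_14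
    (h : ∀ n : ℕ, 1 ≤ n → ∃ p : ℕ, p.Prime ∧ n ^ 2 < p ∧ p < (n + 1) ^ 2) :
    ∃ A : ℝ, 1 < A ∧ ∀ n : ℕ, 1 ≤ n → Prime ⌊A ^ (2 ^ n : ℕ)⌋ := by
  classical
  set g : ℕ → ℕ := fun m => if h' : 1 ≤ m then (h m h').choose else 2 with hg
  have hgspec : ∀ m, 1 ≤ m → (g m).Prime ∧ m ^ 2 < g m ∧ g m < (m + 1) ^ 2 := by
    intro m hm
    simp only [hg, dif_pos hm]
    exact (h m hm).choose_spec
  have hgspec2 : ∀ m, 2 ≤ m → g m + 1 < (m + 1) ^ 2 := by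
    intro m hm
    obtain ⟨hp, hlo, hhi⟩ := hgspec m (by omega)
    have hne : g m ≠ m * (m + 2) := by
      intro he
      rcases hp.eq_one_or_self_of_dvd m ⟨m + 2, he⟩ with h1 | h2
      · omega
      · nlinarith
    have he : (m + 1) ^ 2 = m * (m + 2) + 1 := by ring
    rw [he] at hhi ⊢
    have h1 : g m ≤ m * (m + 2) := Nat.lt_succ_iff.mp hhi
    have h2 : g m < m * (m + 2) := lt_of_le_of_ne h1 hne
    omega
  -- the recursive prime sequence
  set P : ℕ → ℕ := millsSeq g with hPdef
  have hP0 : P 0 = g 2 := rfl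
  have hPs : ∀ n, P (n + 1) = g (P n) := fun n => rfl
  have hP5 : ∀ n, 5 ≤ P n := by
    intro n
    induction n with
    | zero =>
        have := (hgspec 2 (by norm_num)).2.1
        rw [hP0]; omega
    | succ k ih =>
        have := (hgspec (P k) (by omega)).2.1
        rw [hPs]
        nlinarith
  have hPprime : ∀ n, (P n).Prime := by
    intro n
    cases n with
    | zero => exact (hgspec 2 (by norm_num)).1
    | succ k => rw [hPs]; exact (hgspec (P k) (by have := hP5 k; omega)).1
  have hPlo : ∀ n, (P n) ^ 2 < P (n + 1) := by
    intro n
    rw [hPs]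
    exact (hgspec (P n) (by have := hP5 n; omega)).2.1
  have hPhi : ∀ n, P (n + 1) + 1 < (P n + 1) ^ 2 := by
    intro n
    rw [hPs]
    exact hgspec2 (P n) (by have := hP5 n; omega)
  -- real sequences
  set a : ℕ → ℝ := fun n => ((P n : ℝ)) ^ (((2 ^ (n + 1) : ℕ) : ℝ)⁻¹) with ha
  set b : ℕ → ℝ := fun n => (((P n + 1 : ℕ) : ℝ)) ^ (((2 ^ (n + 1) : ℕ) : ℝ)⁻¹) with hb
  have hanneg : ∀ n, 0 ≤ a n := fun n => Real.rpow_nonneg (by positivity) _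
  have hbnneg : ∀ n, 0 ≤ b n := fun n => Real.rpow_nonneg (by positivity) _
  have hapow : ∀ n, (a n) ^ (2 ^ (n + 1) : ℕ) = (P n : ℝ) := by
    intro n
    exact Real.rpow_inv_natCast_pow (by positivity) (by positivity)
  have hbpow : ∀ n, (b n) ^ (2 ^ (n + 1) : ℕ) = ((P n + 1 : ℕ) : ℝ) := by
    intro n
    exact Real.rpow_inv_natCast_pow (by positivity) (by positivity)
  have hapow2 : ∀ n, (a n) ^ (2 ^ (n + 2) : ℕ) = ((P n : ℝ)) ^ 2 := by
    intro n
    have : (2 ^ (n + 2) : ℕ) = 2 ^ (n + 1) * 2 := by ring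
    rw [this, pow_mul, hapow]
  have hbpow2 : ∀ n, (b n) ^ (2 ^ (n + 2) : ℕ) = (((P n + 1 : ℕ) : ℝ)) ^ 2 := by
    intro n
    have : (2 ^ (n + 2) : ℕ) = 2 ^ (n + 1) * 2 := by ring
    rw [this, pow_mul, hbpow]
  have hamono : StrictMono a := by
    apply strictMono_nat_of_lt_succ
    intro n
    rw [← pow_lt_pow_iff_left₀ (hanneg n) (hanneg (n + 1)) (n := 2 ^ (n + 2)) (by positivity)]
    rw [hapow2, hapow]
    have := hPlo n
    exact_mod_cast (by exact_mod_cast this : ((P n) ^ 2 : ℝ) < (P (n + 1) : ℝ))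
  have hbanti : StrictAnti b := by
    apply strictAnti_nat_of_succ_lt
    intro n
    rw [← pow_lt_pow_iff_left₀ (hbnneg (n + 1)) (hbnneg n) (n := 2 ^ (n + 2)) (by positivity)]
    rw [hbpow2, hbpow]
    have := hPhi n
    exact_mod_cast this
  have hab : ∀ n, a n < b n := by
    intro n
    rw [← pow_lt_pow_iff_left₀ (hanneg n) (hbnneg n) (n := 2 ^ (n + 1)) (by positivity)]
    rw [hapow, hbpow]
    exact_mod_cast Nat.lt_succ_self _
  have hable : ∀ n m, a n < b m := by
    intro n m
    rcases le_total n m with hnm | hnm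
    · exact lt_of_le_of_lt (hamono.monotone hnm) (hab m)
    · exact lt_of_lt_of_le (hab n) (hbanti.antitone hnm)
  have hbdd : BddAbove (Set.range a) := by
    refine ⟨b 0, ?_⟩
    rintro x ⟨n, rfl⟩
    exact (hable n 0).le
  set A : ℝ := sSup (Set.range a) with hA
  have hAge : ∀ n, a n ≤ A := fun n => le_csSup hbdd ⟨n, rfl⟩
  have hAlt : ∀ n, A < b n := by
    intro n
    have h1 : A ≤ b (n + 1) := by
      apply csSup_le (Set.range_nonempty a)
      rintro x ⟨m, rfl⟩
      exact (hable m (n + 1)).le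
    exact lt_of_le_of_lt h1 (hbanti (Nat.lt_succ_self n))
  have ha0 : 1 < a 0 := by
    have h1 : (1 : ℝ) < (a 0) ^ (2 ^ 1 : ℕ) := by
      rw [hapow 0]
      have := hP5 0
      exact_mod_cast (by omega : 1 < P 0)
    norm_num at h1
    rwa [abs_of_nonneg (hanneg 0)] at h1
  have hA1 : 1 < A := lt_of_lt_of_le ha0 (hAge 0)
  refine ⟨A, hA1, ?_⟩
  intro n hn
  obtain ⟨k, rfl⟩ : ∃ k, n = k + 1 := ⟨n - 1, by omega⟩
  have hfloor : ⌊A ^ (2 ^ (k + 1) : ℕ)⌋ = (P k : ℤ) := by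
    rw [Int.floor_eq_iff]
    constructor
    · calc ((P k : ℤ) : ℝ) = (P k : ℝ) := by push_cast; ring
        _ = (a k) ^ (2 ^ (k + 1) : ℕ) := (hapow k).symm
        _ ≤ A ^ (2 ^ (k + 1) : ℕ) := pow_le_pow_left₀ (hanneg k) (hAge k) _
    · have h2 : A ^ (2 ^ (k + 1) : ℕ) < (b k) ^ (2 ^ (k + 1) : ℕ) :=
        pow_lt_pow_left₀ (hAlt k) (by linarith) (by positivity)
      rw [hbpow k] at h2
      calc A ^ (2 ^ (k + 1) : ℕ) < ((P k + 1 : ℕ) : ℝ) := h2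
        _ = ((P k : ℤ) : ℝ) + 1 := by push_cast; ring
  rw [hfloor]
  exact Nat.prime_iff_prime_int.mp (hPprime k)
end
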